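/- Let p ∈ A be a monic irreducible polynomial of degree d_p, and let O_{E,(p)} denote the localization of O_E at the multiplicative set A∖(p). Then for every n ≥ 0, p^{⌊n/d_p⌋}·l_n ∈ O_{E,(p)}, where l_n are the logarithm coefficients of the Drinfeld module ρ. -/

import Mathlib

/-!
Integrality of the logarithm coefficients of a Drinfeld module: if `p ∈ A = Fq[θ]` is
monic irreducible of degree `d_p` and `O_{E,(p)}` denotes the localization of `O_E` at
`A ∖ (p)`, then `p^{⌊n/d_p⌋}·l_n ∈ O_{E,(p)}` for all `n ≥ 0`, where `l_n` are the
logarithm coefficients of a Drinfeld module `ρ` of rank `r ≥ 1` over `O_E`, determined by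
`ρ_θ = θ + a_1 τ + ⋯ + a_r τ^r`.
-/

noncomputable section

open Polynomial

variable (Fq : Type) [Field Fq] [Fintype Fq]
variable (E : Type) [Field E] [Algebra (RatFunc Fq) E]
  [FiniteDimensional (RatFunc Fq) E] [Algebra.IsSeparable (RatFunc Fq) E]

/-- The `A = Fq[θ]`-algebra structure on `E`, through `K = Fq(θ)`. -/
local instance instAE : Algebra (Polynomial Fq) E :=
  ((algebraMap (RatFunc Fq) E).comp (algebraMap (Polynomial Fq) (RatFunc Fq))).toAlgebra

/-- `θ` as an element of `E`. -/
def thetaE : E := algebraMap (RatFunc Fq) E RatFunc.X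

/-- The logarithm coefficients `l_n ∈ E` of the Drinfeld module with
`ρ_θ = θ + a_1 τ + ⋯ + a_r τ^r`:  `l_0 = 1`, `l_j = 0` for `j < 0`, and
`(θ - θ^{q^n}) l_n = ∑_{l=1}^{r} l_{n-l} a_l^{q^{n-l}}` for `n ≥ 1`. -/
def lCoeff (r : ℕ) (a : ℕ → integralClosure (Polynomial Fq) E) : ℕ → E
  | 0 => 1
  | (n + 1) =>
      (thetaE Fq E - thetaE Fq E ^ (Fintype.card Fq) ^ (n + 1))⁻¹ *
        ∑ l ∈ Finset.Icc 1 r,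
          if h : 1 ≤ l ∧ l ≤ n + 1 then
            lCoeff r a (n + 1 - l) * (a l : E) ^ (Fintype.card Fq) ^ (n + 1 - l)
          else 0
  decreasing_by omega

/-- `x ∈ O_{E,(p)}`: there are `u ∈ O_E` and `b ∈ A` with `p ∤ b` and `b·x = u`. -/
def MemLocOE (p : Polynomial Fq) (x : E) : Prop :=
  ∃ (u : integralClosure (Polynomial Fq) E) (b : Polynomial Fq), ¬ p ∣ b ∧
    algebraMap (Polynomial Fq) E b * x = (u : E)


lemma nat_aux {q : ℕ} (hq : 2 ≤ q) {d : ℕ} (hd : 1 ≤ d) :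
    ∀ n : ℕ, (q ^ d - 1 ∣ q ^ n - 1) → d ∣ n := by
  intro n
  induction n using Nat.strong_induction_on with
  | _ n ih =>
    intro h
    rcases lt_or_ge n d with hnd | hnd
    · have hlt : q ^ n < q ^ d := Nat.pow_lt_pow_right (by omega) hnd
      have h2 : 1 ≤ q ^ n := Nat.one_le_pow _ _ (by omega)
      have h0 : q ^ n - 1 = 0 := Nat.eq_zero_of_dvd_of_lt h (by omega)
      have hn0 : n = 0 := by
        by_contra hn
        have := Nat.one_lt_pow hn (show 1 < q by omega)
        omega
      simp [hn0]
    · have h2 : 1 ≤ q ^ (n - d) := Nat.one_le_pow _ _ (by omega)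
      have h3 : q ^ (n - d) ≤ q ^ n := Nat.pow_le_pow_right (by omega) (by omega)
      have hb : 1 ≤ q ^ d := Nat.one_le_pow _ _ (by omega)
      have e1 : q ^ n = q ^ (n - d) * q ^ d := by rw [← pow_add]; congr 1; omega
      have e3 : q ^ (n - d) * (q ^ d - 1) + q ^ (n - d) = q ^ n := by
        have : q ^ (n - d) * (q ^ d - 1) + q ^ (n - d) = q ^ (n - d) * ((q ^ d - 1) + 1) := by
          ring
        rw [this, Nat.sub_add_cancel hb, ← e1]
      have e2 : q ^ d - 1 ∣ q ^ (n - d) * (q ^ d - 1) := dvd_mul_left _ _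
      have key : q ^ d - 1 ∣ q ^ (n - d) - 1 := by
        have h4 := Nat.dvd_sub h e2
        have e4 : q ^ n - 1 - q ^ (n - d) * (q ^ d - 1) = q ^ (n - d) - 1 := by omega
        rwa [e4] at h4
      obtain ⟨c, hc⟩ := ih (n - d) (by omega) key
      exact ⟨c + 1, by rw [Nat.mul_add, mul_one]; omega⟩

lemma sqfree_aux (n : ℕ) (hn : n ≠ 0) :
    Squarefree ((X : Polynomial Fq) ^ (Fintype.card Fq) ^ n - X) := by
  haveI : CharP Fq (ringChar Fq) := ringChar.charP Fq
  have hprime : (ringChar Fq).Prime := CharP.char_is_prime Fq (ringChar Fq)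
  obtain ⟨k, hk, hcard⟩ := FiniteField.card Fq (ringChar Fq)
  have hdvd : ringChar Fq ∣ Fintype.card Fq ^ n := by
    rw [hcard]
    exact dvd_pow (dvd_pow_self _ k.pos.ne') hn
  exact (galois_poly_separable (ringChar Fq) _ hdvd).squarefree

lemma Fq_dvd_iff (p : Polynomial Fq) (hp : Irreducible p) (n : ℕ) :
    p ∣ ((X : Polynomial Fq) ^ (Fintype.card Fq) ^ n - X) ↔ p.natDegree ∣ n := by
  haveI := Fact.mk hp
  have hd1 : 1 ≤ p.natDegree := hp.natDegree_pos
  have hq2 : 2 ≤ Fintype.card Fq := Fintype.one_lt_card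
  set F := AdjoinRoot p with hF
  let pb : PowerBasis Fq F := AdjoinRoot.powerBasis hp.ne_zero
  haveI : Module.Finite Fq F := Module.Finite.of_basis pb.basis
  haveI : Finite F := Module.finite_of_finite Fq
  haveI : Fintype F := Fintype.ofFinite F
  have hcardF : Fintype.card F = Fintype.card Fq ^ p.natDegree := by
    rw [Module.card_fintype pb.basis, Fintype.card_fin]
    rfl
  have h1 : p ∣ ((X : Polynomial Fq) ^ (Fintype.card Fq) ^ n - X) ↔
      (AdjoinRoot.root p) ^ (Fintype.card Fq) ^ n = AdjoinRoot.root p := by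
    rw [← AdjoinRoot.mk_eq_zero, map_sub, map_pow, AdjoinRoot.mk_X, sub_eq_zero]
  rw [h1]
  constructor
  · intro hroot
    -- the Frobenius-fixed subalgebra
    haveI : CharP Fq (ringChar Fq) := ringChar.charP Fq
    have hprime : (ringChar Fq).Prime := CharP.char_is_prime Fq (ringChar Fq)
    haveI := Fact.mk hprime
    haveI : CharP F (ringChar Fq) :=
      charP_of_injective_algebraMap (algebraMap Fq F).injective _
    obtain ⟨k, -, hcard⟩ := FiniteField.card Fq (ringChar Fq)
    have hall : ∀ x : F, x ^ (Fintype.card Fq) ^ n = x := by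
      set S : Subalgebra Fq F :=
        { carrier := {x : F | x ^ (Fintype.card Fq) ^ n = x}
          mul_mem' := by
            intro x y hx hy
            simp only [Set.mem_setOf_eq, mul_pow] at *
            rw [hx, hy]
          one_mem' := by simp
          add_mem' := by
            intro x y hx hy
            simp only [Set.mem_setOf_eq] at *
            have e : (Fintype.card Fq) ^ n = (ringChar Fq) ^ ((k : ℕ) * n) := by
              rw [hcard, ← pow_mul]
            rw [e, add_pow_char_pow, ← e, hx, hy]
          algebraMap_mem' := by
            intro c
            simp only [Set.mem_setOf_eq, ← map_pow, FiniteField.pow_card_pow] } with hS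
      have htop : (⊤ : Subalgebra Fq F) ≤ S := by
        rw [← AdjoinRoot.adjoinRoot_eq_top (f := p)]
        apply Algebra.adjoin_le
        intro x hx
        rw [Set.mem_singleton_iff] at hx
        subst hx
        exact hroot
      intro x
      exact htop (by trivial)
    obtain ⟨g, hg⟩ := IsCyclic.exists_generator (α := Fˣ)
    have horder : orderOf g = Fintype.card Fq ^ p.natDegree - 1 := by
      rw [orderOf_eq_card_of_forall_mem_zpowers hg, Nat.card_units,
        Nat.card_eq_fintype_card, hcardF]
    have hq1 : 1 ≤ (Fintype.card Fq) ^ n := Nat.one_le_pow _ _ (by omega)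
    have hgpow : g ^ (Fintype.card Fq) ^ n = g := by
      ext
      rw [Units.val_pow_eq_pow_val]
      exact hall g
    have hg1 : g ^ ((Fintype.card Fq) ^ n - 1) = 1 := by
      have h5 : g ^ (((Fintype.card Fq) ^ n - 1) + 1) = g ^ ((Fintype.card Fq) ^ n - 1) * g :=
        pow_succ g _
      rw [show ((Fintype.card Fq) ^ n - 1) + 1 = (Fintype.card Fq) ^ n by omega, hgpow] at h5
      have := mul_right_cancel (h5.symm.trans (one_mul g).symm)
      exact this
    have hdvd2 : (Fintype.card Fq) ^ p.natDegree - 1 ∣ (Fintype.card Fq) ^ n - 1 :=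
      horder ▸ orderOf_dvd_of_pow_eq_one hg1
    exact nat_aux hq2 hd1 n hdvd2
  · rintro ⟨k, hk⟩
    calc (AdjoinRoot.root p) ^ (Fintype.card Fq) ^ n
        = (AdjoinRoot.root p) ^ (Fintype.card F) ^ k := by
          rw [hcardF, ← pow_mul, ← hk]
      _ = AdjoinRoot.root p := FiniteField.pow_card_pow _ _

lemma algMap_inj : Function.Injective (algebraMap (Polynomial Fq) E) := by
  have h : algebraMap (Polynomial Fq) E =
      (algebraMap (RatFunc Fq) E).comp (algebraMap (Polynomial Fq) (RatFunc Fq)) := rfl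
  rw [h]
  exact (algebraMap (RatFunc Fq) E).injective.comp (RatFunc.algebraMap_injective Fq)

lemma thetaE_eq : algebraMap (Polynomial Fq) E Polynomial.X = thetaE Fq E := by
  rw [thetaE, ← RatFunc.algebraMap_X (K := Fq)]
  rfl

variable {p : Polynomial Fq}

lemma memLoc_zero (hp : Irreducible p) : MemLocOE Fq E p 0 :=
  ⟨0, 1, fun h => hp.not_isUnit (isUnit_of_dvd_one h), by simp⟩

lemma memLoc_add (hp : Irreducible p) {x y : E} (hx : MemLocOE Fq E p x)
    (hy : MemLocOE Fq E p y) : MemLocOE Fq E p (x + y) := by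
  obtain ⟨u1, b1, hb1, h1⟩ := hx
  obtain ⟨u2, b2, hb2, h2⟩ := hy
  refine ⟨⟨algebraMap _ E b2, Subalgebra.algebraMap_mem _ b2⟩ * u1 +
      ⟨algebraMap _ E b1, Subalgebra.algebraMap_mem _ b1⟩ * u2, b1 * b2, ?_, ?_⟩
  · intro h
    rcases hp.prime.dvd_mul.mp h with h' | h'
    · exact hb1 h'
    · exact hb2 h'
  · have key : algebraMap (Polynomial Fq) E (b1 * b2) * (x + y) =
        algebraMap (Polynomial Fq) E b2 * (algebraMap (Polynomial Fq) E b1 * x) +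
        algebraMap (Polynomial Fq) E b1 * (algebraMap (Polynomial Fq) E b2 * y) := by
      rw [map_mul]; ring
    rw [key, h1, h2]
    push_cast
    ring

lemma memLoc_sum (hp : Irreducible p) {ι : Type} (s : Finset ι) (f : ι → E)
    (h : ∀ i ∈ s, MemLocOE Fq E p (f i)) : MemLocOE Fq E p (∑ i ∈ s, f i) :=
  Finset.sum_induction f _ (fun _ _ ha hb => memLoc_add Fq E hp ha hb)
    (memLoc_zero Fq E hp) h

lemma memLoc_coe_mul (w : integralClosure (Polynomial Fq) E) {x : E}
    (hx : MemLocOE Fq E p x) : MemLocOE Fq E p ((w : E) * x) := by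
  obtain ⟨u, b, hb, h⟩ := hx
  refine ⟨w * u, b, hb, ?_⟩
  have key : algebraMap (Polynomial Fq) E b * ((w : E) * x) =
      (w : E) * (algebraMap (Polynomial Fq) E b * x) := by ring
  rw [key, h]
  push_cast
  ring

lemma memLoc_map_mul (g : Polynomial Fq) {x : E} (hx : MemLocOE Fq E p x) :
    MemLocOE Fq E p (algebraMap (Polynomial Fq) E g * x) :=
  memLoc_coe_mul Fq E ⟨algebraMap _ E g, Subalgebra.algebraMap_mem _ g⟩ hx

lemma memLoc_div (hp : Irreducible p) (g : Polynomial Fq) (hg : ¬ p ∣ g) {x : E}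
    (hx : MemLocOE Fq E p x) : MemLocOE Fq E p ((algebraMap (Polynomial Fq) E g)⁻¹ * x) := by
  obtain ⟨u, b, hb, h⟩ := hx
  have hg0 : algebraMap (Polynomial Fq) E g ≠ 0 := by
    have hgz : g ≠ 0 := by rintro rfl; exact hg (dvd_zero p)
    exact fun hc => hgz (algMap_inj Fq E (by simpa using hc))
  refine ⟨u, g * b, ?_, ?_⟩
  · intro h'
    rcases hp.prime.dvd_mul.mp h' with h'' | h''
    · exact hg h''
    · exact hb h''
  · have key : algebraMap (Polynomial Fq) E (g * b) *
        ((algebraMap (Polynomial Fq) E g)⁻¹ * x) =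
        (algebraMap (Polynomial Fq) E g * (algebraMap (Polynomial Fq) E g)⁻¹) *
          (algebraMap (Polynomial Fq) E b * x) := by
      rw [map_mul]; ring
    rw [key, mul_inv_cancel₀ hg0, one_mul, h]

theorem log_coeff_integrality
    (r : ℕ) (hr : 1 ≤ r) (a : ℕ → integralClosure (Polynomial Fq) E) (ha : a r ≠ 0)
    (p : Polynomial Fq) (hp : Irreducible p) (hmonic : p.Monic) (n : ℕ) :
    MemLocOE Fq E p
      (algebraMap (Polynomial Fq) E (p ^ (n / p.natDegree)) * lCoeff Fq E r a n) := by
  have hd1 : 1 ≤ p.natDegree := hp.natDegree_pos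
  induction n using Nat.strong_induction_on with
  | _ n ih =>
    cases n with
    | zero =>
      refine ⟨1, 1, fun h => hp.not_isUnit (isUnit_of_dvd_one h), ?_⟩
      simp [lCoeff]
    | succ n =>
      have hP0 : algebraMap (Polynomial Fq) E p ≠ 0 := by
        have : (p : Polynomial Fq) ≠ 0 := hp.ne_zero
        exact fun hc => this (algMap_inj Fq E (by simpa using hc))
      have hθ : thetaE Fq E - thetaE Fq E ^ (Fintype.card Fq) ^ (n + 1) =
          algebraMap (Polynomial Fq) E (X - X ^ (Fintype.card Fq) ^ (n + 1)) := by
        rw [map_sub, map_pow, thetaE_eq]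
      obtain ⟨ε, g, hg, hfac, hεe⟩ :
          ∃ (ε : ℕ) (g : Polynomial Fq), ¬ p ∣ g ∧
            (X : Polynomial Fq) - X ^ (Fintype.card Fq) ^ (n + 1) = p ^ ε * g ∧
            (n + 1) / p.natDegree = n / p.natDegree + ε := by
        by_cases hdv : p.natDegree ∣ (n + 1)
        · obtain ⟨m, hm⟩ := (Fq_dvd_iff Fq p hp (n + 1)).mpr hdv
          refine ⟨1, -m, ?_, ?_, ?_⟩
          · rw [dvd_neg]
            intro hpm
            obtain ⟨c, hc⟩ := hpm
            have hsq := sqfree_aux Fq (n + 1) (Nat.succ_ne_zero n)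
            refine hp.not_isUnit (hsq p ?_)
            rw [hm, hc]
            exact ⟨c, by ring⟩
          · rw [pow_one, ← neg_sub, hm]; ring
          · rw [Nat.succ_div, if_pos hdv]
        · refine ⟨0, X - X ^ (Fintype.card Fq) ^ (n + 1), ?_, by rw [pow_zero, one_mul],
            by rw [Nat.succ_div, if_neg hdv]⟩
          intro hcon
          apply hdv
          apply (Fq_dvd_iff Fq p hp (n + 1)).mp
          have := dvd_neg.mpr hcon
          rwa [neg_sub] at this
      have hG0 : algebraMap (Polynomial Fq) E g ≠ 0 := by
        have hgz : g ≠ 0 := by rintro rfl; exact hg (dvd_zero p)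
        exact fun hc => hgz (algMap_inj Fq E (by simpa using hc))
      rw [lCoeff, hθ, hfac]
      have hkey : ∀ S : E,
          algebraMap (Polynomial Fq) E (p ^ ((n + 1) / p.natDegree)) *
            ((algebraMap (Polynomial Fq) E (p ^ ε * g))⁻¹ * S) =
          (algebraMap (Polynomial Fq) E g)⁻¹ *
            (algebraMap (Polynomial Fq) E (p ^ (n / p.natDegree)) * S) := by
        intro S
        rw [hεe, pow_add, map_mul, map_mul, map_pow, map_pow]
        have hPε : (algebraMap (Polynomial Fq) E p) ^ ε ≠ 0 := pow_ne_zero _ hP0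
        rw [mul_inv_rev]
        field_simp
      rw [hkey]
      apply memLoc_div Fq E hp g hg
      rw [Finset.mul_sum]
      apply memLoc_sum Fq E hp
      intro l hl
      by_cases hcond : 1 ≤ l ∧ l ≤ n + 1
      · rw [dif_pos hcond]
        have hl1 : (n + 1 - l) / p.natDegree ≤ n / p.natDegree :=
          Nat.div_le_div_right (by omega)
        have hsplit : (p : Polynomial Fq) ^ (n / p.natDegree) =
            p ^ (n / p.natDegree - (n + 1 - l) / p.natDegree) *
              p ^ ((n + 1 - l) / p.natDegree) := by
          rw [← pow_add]; congr 1; omega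
        rw [hsplit, map_mul]
        have hre : algebraMap (Polynomial Fq) E
              (p ^ (n / p.natDegree - (n + 1 - l) / p.natDegree)) *
            algebraMap (Polynomial Fq) E (p ^ ((n + 1 - l) / p.natDegree)) *
            (lCoeff Fq E r a (n + 1 - l) * (a l : E) ^ (Fintype.card Fq) ^ (n + 1 - l)) =
            ((a l ^ (Fintype.card Fq) ^ (n + 1 - l) : integralClosure (Polynomial Fq) E) : E) *
            (algebraMap (Polynomial Fq) E
                (p ^ (n / p.natDegree - (n + 1 - l) / p.natDegree)) *
              (algebraMap (Polynomial Fq) E (p ^ ((n + 1 - l) / p.natDegree)) *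
                lCoeff Fq E r a (n + 1 - l))) := by
          push_cast
          ring
        rw [hre]
        exact memLoc_coe_mul Fq E _ (memLoc_map_mul Fq E _ (ih (n + 1 - l) (by omega)))
      · rw [dif_neg hcond, mul_zero]
        exact memLoc_zero Fq E hp


end
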